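/- Let T be a tetrahedron in ℝ³ with vertices v₀, v₁, v₂, v₃ and let x be the circumcenter of T (the unique point equidistant from all four vertices, assuming the vertices are affinely independent). Then at most one vertex v of T is 'negative', i.e., at most one vertex is strictly separated from x by the plane through the opposite face, provided all edge lengths of T are at most 2√2 and at least 2. -/

import Mathlib

set_option maxHeartbeats 1600000

open Finset
open scoped RealInnerProductSpace

lemma alg_core (a b c d p q r s t u Rsq : ℝ)
    (hsum : a + b + c + d = 1) (ha : a < 0) (hb : b < 0)
    (hp1 : 4 ≤ p) (hp2 : p ≤ 8) (hq1 : 4 ≤ q) (hq2 : q ≤ 8)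
    (hr1 : 4 ≤ r) (hr2 : r ≤ 8) (hs1 : 4 ≤ s) (hs2 : s ≤ 8)
    (ht1 : 4 ≤ t) (ht2 : t ≤ 8) (hu1 : 4 ≤ u) (hu2 : u ≤ 8)
    (hR : 1 ≤ Rsq)
    (hc : 0 ≤ c) (hd : 0 ≤ d)
    (e0 : b * p + c * q + d * r = 2 * Rsq)
    (e1 : a * p + c * s + d * t = 2 * Rsq)
    (e2 : a * q + b * s + d * u = 2 * Rsq)
    (e3 : a * r + b * t + c * u = 2 * Rsq) :
    p = 8 ∧ q = 4 ∧ r = 4 ∧ s = 4 ∧ t = 4 ∧ u = 8 := by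
  have key : a * (p - q - r) + b * (p - s - t) + c * (q + s - u) + d * (r + t - u) = 0 := by
    linear_combination e0 + e1 - e2 - e3
  have t1 : 0 ≤ a * (p - q - r) := by
    nlinarith [mul_nonneg (show (0:ℝ) ≤ -a by linarith) (show (0:ℝ) ≤ q + r - p by linarith)]
  have t2 : 0 ≤ b * (p - s - t) := by
    nlinarith [mul_nonneg (show (0:ℝ) ≤ -b by linarith) (show (0:ℝ) ≤ s + t - p by linarith)]
  have t3 : 0 ≤ c * (q + s - u) := mul_nonneg hc (by linarith)
  have t4 : 0 ≤ d * (r + t - u) := mul_nonneg hd (by linarith)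
  have z1 : a * (p - q - r) = 0 := by linarith
  have z2 : b * (p - s - t) = 0 := by linarith
  have z3 : c * (q + s - u) = 0 := by linarith
  have z4 : d * (r + t - u) = 0 := by linarith
  have hpqr : p - q - r = 0 := by
    rcases mul_eq_zero.mp z1 with h | h
    · exact absurd h ha.ne
    · exact h
  have hpst : p - s - t = 0 := by
    rcases mul_eq_zero.mp z2 with h | h
    · exact absurd h hb.ne
    · exact h
  have hp : p = 8 := by linarith
  have hq : q = 4 := by linarith
  have hr : r = 4 := by linarith
  have hs : s = 4 := by linarith
  have ht : t = 4 := by linarith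
  have hcd : 0 < c + d := by linarith
  have hz : (c + d) * (8 - u) = 0 := by
    linear_combination z3 + z4 - c * hq - c * hs - d * hr - d * ht
  have hu : u = 8 := by
    rcases mul_eq_zero.mp hz with h | h
    · exact absurd h hcd.ne'
    · linarith
  exact ⟨hp, hq, hr, hs, ht, hu⟩


lemma neg3 (a b c r t u Rsq : ℝ) (ha : a < 0) (hb : b < 0) (hc : c < 0)
    (hr : 4 ≤ r) (ht : 4 ≤ t) (hu : 4 ≤ u) (hR : 1 ≤ Rsq)
    (e : a * r + b * t + c * u = 2 * Rsq) : False := by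
  nlinarith [mul_le_mul_of_nonpos_left hr ha.le, mul_le_mul_of_nonpos_left ht hb.le,
    mul_le_mul_of_nonpos_left hu hc.le]


lemma sum_eq_zero_of_inner (u0 u1 u2 u3 : EuclideanSpace ℝ (Fin 3)) (R : ℝ)
    (h00 : (inner ℝ u0 u0 : ℝ) = R) (h11 : (inner ℝ u1 u1 : ℝ) = R)
    (h22 : (inner ℝ u2 u2 : ℝ) = R) (h33 : (inner ℝ u3 u3 : ℝ) = R)
    (h01 : (inner ℝ u0 u1 : ℝ) = R - 4) (h23 : (inner ℝ u2 u3 : ℝ) = R - 4)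
    (h02 : (inner ℝ u0 u2 : ℝ) = R - 2) (h03 : (inner ℝ u0 u3 : ℝ) = R - 2)
    (h12 : (inner ℝ u1 u2 : ℝ) = R - 2) (h13 : (inner ℝ u1 u3 : ℝ) = R - 2) :
    u0 + u1 - u2 - u3 = 0 := by
  have h10 : (inner ℝ u1 u0 : ℝ) = R - 4 := by rw [real_inner_comm]; exact h01
  have h32 : (inner ℝ u3 u2 : ℝ) = R - 4 := by rw [real_inner_comm]; exact h23
  have h20 : (inner ℝ u2 u0 : ℝ) = R - 2 := by rw [real_inner_comm]; exact h02
  have h30 : (inner ℝ u3 u0 : ℝ) = R - 2 := by rw [real_inner_comm]; exact h03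
  have h21 : (inner ℝ u2 u1 : ℝ) = R - 2 := by rw [real_inner_comm]; exact h12
  have h31 : (inner ℝ u3 u1 : ℝ) = R - 2 := by rw [real_inner_comm]; exact h13
  rw [← inner_self_eq_zero (𝕜 := ℝ)]
  simp only [inner_add_left, inner_sub_left, inner_add_right, inner_sub_right,
    h00, h11, h22, h33, h01, h23, h02, h03, h12, h13, h10, h32, h20, h30, h21, h31]
  ring

lemma core_two_neg (v : Fin 4 → EuclideanSpace ℝ (Fin 3))
    (hindep : AffineIndependent ℝ v)
    (hedge : ∀ i j, i ≠ j →
      2 ≤ dist (v i) (v j) ∧ dist (v i) (v j) ≤ 2 * Real.sqrt 2)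
    (x : EuclideanSpace ℝ (Fin 3))
    (hx : ∀ i j : Fin 4, dist x (v i) = dist x (v j))
    (f g : EuclideanSpace ℝ (Fin 3) →ᵃ[ℝ] ℝ)
    (hf0 : ∀ j, j ≠ 0 → f (v j) = 0) (hf1 : f (v 0) < 0) (hf2 : 0 < f x)
    (hg0 : ∀ j, j ≠ 1 → g (v j) = 0) (hg1 : g (v 1) < 0) (hg2 : 0 < g x) :
    False := by
  -- barycentric coordinates of x
  have htop : affineSpan ℝ (Set.range v) = ⊤ :=
    hindep.affineSpan_eq_top_iff_card_eq_finrank_add_one.mpr (by simp)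
  have hxmem : x ∈ affineSpan ℝ (Set.range v) := htop ▸ AffineSubspace.mem_top ℝ _ x
  obtain ⟨w, hw1, hwx⟩ := eq_affineCombination_of_mem_affineSpan_of_fintype hxmem
  have hxlin : x = ∑ m : Fin 4, w m • v m := by
    rw [hwx, Finset.univ.affineCombination_eq_linear_combination v w hw1]
  have hsum4 : w 0 + w 1 + w 2 + w 3 = 1 := by
    rw [← Fin.sum_univ_four w]; exact hw1
  -- negativity of the barycentric coordinates 0 and 1
  have hfx : f x = w 0 * f (v 0) := by
    rw [hwx, Finset.univ.map_affineCombination v w hw1,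
      Finset.univ.affineCombination_eq_linear_combination (f ∘ v) w hw1]
    simp [Fin.sum_univ_four, hf0 1 (by decide), hf0 2 (by decide), hf0 3 (by decide)]
  have hgx : g x = w 1 * g (v 1) := by
    rw [hwx, Finset.univ.map_affineCombination v w hw1,
      Finset.univ.affineCombination_eq_linear_combination (g ∘ v) w hw1]
    simp [Fin.sum_univ_four, hg0 0 (by decide), hg0 2 (by decide), hg0 3 (by decide)]
  have hw0 : w 0 < 0 := by nlinarith [hf2, hf1]
  have hw1neg : w 1 < 0 := by nlinarith [hg2, hg1]
  -- circumradius squared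
  set Rsq : ℝ := dist x (v 0) ^ 2 with hRsqdef
  have hR1 : 1 ≤ dist x (v 0) := by
    have h01 := (hedge 0 1 (by decide)).1
    have htri := dist_triangle (v 0) x (v 1)
    rw [dist_comm (v 0) x, ← hx 0 1] at htri
    linarith
  have hRsq1 : 1 ≤ Rsq := by nlinarith
  have hnorm : ∀ m : Fin 4, ‖v m - x‖ ^ 2 = Rsq := by
    intro m
    rw [← dist_eq_norm, dist_comm, hx m 0]  -- careful: need dist x (v m)
  have hinner : ∀ a b : Fin 4, (inner ℝ (v a - x) (v b - x) : ℝ) = Rsq - dist (v a) (v b) ^ 2 / 2 := by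
    intro a b
    have hab : ‖(v a - x) - (v b - x)‖ = dist (v a) (v b) := by
      rw [dist_eq_norm]; congr 1; abel
    have hexp := norm_sub_sq_real (v a - x) (v b - x)
    rw [hab, hnorm a, hnorm b] at hexp
    linarith
  -- the barycentric combination of the vertices minus x is zero
  have hzero : ∑ m : Fin 4, w m • (v m - x) = (0 : EuclideanSpace ℝ (Fin 3)) := by
    have h1 : ∑ m : Fin 4, w m • (v m - x)
        = (∑ m : Fin 4, w m • v m) - (∑ m : Fin 4, w m • x) := by
      rw [← Finset.sum_sub_distrib]
      exact Finset.sum_congr rfl fun m _ => smul_sub _ _ _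
    rw [h1, ← Finset.sum_smul, hw1, one_smul, ← hxlin, sub_self]
  have heq : ∀ i : Fin 4,
      ∑ m : Fin 4, w m * (Rsq - dist (v m) (v i) ^ 2 / 2) = 0 := by
    intro i
    have h0 : (inner ℝ (∑ m : Fin 4, w m • (v m - x)) (v i - x) : ℝ) = 0 := by
      rw [hzero, inner_zero_left]
    rw [sum_inner] at h0
    simp only [real_inner_smul_left, hinner] at h0
    exact h0
  -- squared edge lengths
  have hbound : ∀ a b : Fin 4, a ≠ b →
      4 ≤ dist (v a) (v b) ^ 2 ∧ dist (v a) (v b) ^ 2 ≤ 8 := by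
    intro a b hab
    obtain ⟨h1, h2⟩ := hedge a b hab
    have hs2 : Real.sqrt 2 ^ 2 = 2 := Real.sq_sqrt (by norm_num)
    constructor
    · nlinarith
    · nlinarith [Real.sqrt_nonneg 2, dist_nonneg (x := v a) (y := v b)]
  have heq0 := heq 0
  have heq1 := heq 1
  have heq2 := heq 2
  have heq3 := heq 3
  simp only [Fin.sum_univ_four, dist_self] at heq0 heq1 heq2 heq3
  rw [dist_comm (v 1) (v 0), dist_comm (v 2) (v 0), dist_comm (v 3) (v 0)] at heq0
  rw [dist_comm (v 2) (v 1), dist_comm (v 3) (v 1)] at heq1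
  rw [dist_comm (v 3) (v 2)] at heq2
  set p := dist (v 0) (v 1) ^ 2 with hpdef
  set q := dist (v 0) (v 2) ^ 2 with hqdef
  set r := dist (v 0) (v 3) ^ 2 with hrdef
  set s := dist (v 1) (v 2) ^ 2 with hsdef
  set t := dist (v 1) (v 3) ^ 2 with htdef
  set u := dist (v 2) (v 3) ^ 2 with hudef
  have e0 : w 1 * p + w 2 * q + w 3 * r = 2 * Rsq := by
    linear_combination (-2 : ℝ) * heq0 + (2 * Rsq) * hsum4
  have e1 : w 0 * p + w 2 * s + w 3 * t = 2 * Rsq := by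
    linear_combination (-2 : ℝ) * heq1 + (2 * Rsq) * hsum4
  have e2 : w 0 * q + w 1 * s + w 3 * u = 2 * Rsq := by
    linear_combination (-2 : ℝ) * heq2 + (2 * Rsq) * hsum4
  have e3 : w 0 * r + w 1 * t + w 2 * u = 2 * Rsq := by
    linear_combination (-2 : ℝ) * heq3 + (2 * Rsq) * hsum4
  obtain ⟨hp1, hp2⟩ := hbound 0 1 (by decide)
  obtain ⟨hq1, hq2⟩ := hbound 0 2 (by decide)
  obtain ⟨hr1, hr2⟩ := hbound 0 3 (by decide)
  obtain ⟨hs1, hs2⟩ := hbound 1 2 (by decide)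
  obtain ⟨ht1, ht2⟩ := hbound 1 3 (by decide)
  obtain ⟨hu1, hu2⟩ := hbound 2 3 (by decide)
  -- the other two coordinates are nonnegative
  have hw2 : 0 ≤ w 2 := by
    by_contra hcon
    push_neg at hcon
    exact neg3 (w 0) (w 1) (w 2) r t u Rsq hw0 hw1neg hcon hr1 ht1 hu1 hRsq1 e3
  have hw3 : 0 ≤ w 3 := by
    by_contra hcon
    push_neg at hcon
    exact neg3 (w 0) (w 1) (w 3) q s u Rsq hw0 hw1neg hcon hq1 hs1 hu1 hRsq1 e2
  obtain ⟨hP, hQ, hR', hS, hT, hU⟩ :=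
    alg_core (w 0) (w 1) (w 2) (w 3) p q r s t u Rsq hsum4 hw0 hw1neg
      hp1 hp2 hq1 hq2 hr1 hr2 hs1 hs2 ht1 ht2 hu1 hu2 hRsq1 hw2 hw3 e0 e1 e2 e3
  -- now v 0 + v 1 = v 2 + v 3, contradicting affine independence
  have hzv : (v 0 - x) + (v 1 - x) - (v 2 - x) - (v 3 - x) = (0 : EuclideanSpace ℝ (Fin 3)) := by
    apply sum_eq_zero_of_inner _ _ _ _ Rsq
    · rw [hinner 0 0, dist_self]; ring
    · rw [hinner 1 1, dist_self]; ring
    · rw [hinner 2 2, dist_self]; ring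
    · rw [hinner 3 3, dist_self]; ring
    · rw [hinner 0 1, ← hpdef, hP]; ring
    · rw [hinner 2 3, ← hudef, hU]; ring
    · rw [hinner 0 2, ← hqdef, hQ]; ring
    · rw [hinner 0 3, ← hrdef, hR']; ring
    · rw [hinner 1 2, ← hsdef, hS]; ring
    · rw [hinner 1 3, ← htdef, hT]; ring
  have hvv : v 0 + v 1 - v 2 - v 3 = (0 : EuclideanSpace ℝ (Fin 3)) := by
    rw [← hzv]; abel
  have hcomb : ∑ e : Fin 4, (![1, 1, -1, -1] : Fin 4 → ℝ) e • v e
      = (0 : EuclideanSpace ℝ (Fin 3)) := by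
    simp only [Fin.sum_univ_four, Matrix.cons_val_zero, Matrix.cons_val_one, Matrix.head_cons,
      Matrix.cons_val_two, Matrix.tail_cons, Matrix.cons_val_three, one_smul, neg_one_smul]
    rw [← hvv]; abel
  have hzerow := affineIndependent_iff.mp hindep Finset.univ ![1, 1, -1, -1]
    (by simp [Fin.sum_univ_four]) hcomb 0 (Finset.mem_univ 0)
  norm_num at hzerow

/-- A tetrahedron with affinely independent vertices, all edge lengths in `[2, 2√2]`,
and circumcenter `x`, has at most one "negative" vertex, i.e. at most one vertex that
is strictly separated from `x` by the plane through the opposite face. -/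
theorem at_most_one_negative_vertex (v : Fin 4 → EuclideanSpace ℝ (Fin 3))
    (hindep : AffineIndependent ℝ v)
    (hedge : ∀ i j, i ≠ j →
      2 ≤ dist (v i) (v j) ∧ dist (v i) (v j) ≤ 2 * Real.sqrt 2)
    (x : EuclideanSpace ℝ (Fin 3))
    (hx : ∀ i j : Fin 4, dist x (v i) = dist x (v j)) :
    {i : Fin 4 | ∃ f : EuclideanSpace ℝ (Fin 3) →ᵃ[ℝ] ℝ,
        (∀ j, j ≠ i → f (v j) = 0) ∧ f (v i) < 0 ∧ 0 < f x}.Subsingleton := by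
  have hperm : ∀ i j : Fin 4, i ≠ j → ∃ σ : Equiv.Perm (Fin 4), σ 0 = i ∧ σ 1 = j := by decide
  intro i hi j hj
  by_contra hij
  obtain ⟨f, hf1, hf2, hf3⟩ := hi
  obtain ⟨g, hg1, hg2, hg3⟩ := hj
  obtain ⟨σ, hσ0, hσ1⟩ := hperm i j hij
  refine core_two_neg (v ∘ σ) (hindep.comp_embedding σ.toEmbedding) ?_ x ?_ f g ?_ ?_ hf3 ?_ ?_ hg3
  · intro a b hab
    exact hedge _ _ fun h => hab (σ.injective h)
  · intro a b
    exact hx _ _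
  · intro m hm
    apply hf1
    intro h
    apply hm
    apply σ.injective
    rw [hσ0]
    exact h
  · show f (v (σ 0)) < 0
    rw [hσ0]; exact hf2
  · intro m hm
    apply hg1
    intro h
    apply hm
    apply σ.injective
    rw [hσ1]
    exact h
  · show g (v (σ 1)) < 0
    rw [hσ1]; exact hg2
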